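/- arXiv:1007.5093 — 4 statements merged into one kernel-verified Lean document; each statement's English description precedes it below -/
import Mathlib

section
/- (Theorem: CP1 for Update methods) Suppose the inner component (Meth₂, S, Do₂, IT₂) satisfies TP1: Do₂(IT₂(m2,m1), Do₂(m1,s)) = Do₂(IT₂(m1,m2), Do₂(m2,s)) for all s, m1, m2. Define Update methods on states st : I → S as pairs (i, m) with i : I, m : Meth₂, with Do((i,m), st) = fun k => if k = i then Do₂(m, st k) else st k, and IT((i,m1),(j,m2)) = (i, IT₂(m1,m2)) if i = j, else (i, m1). Then TP1 holds for Update methods: Do(IT(u2,u1), Do(u1,st)) = Do(IT(u1,u2), Do(u2,st)) for all st, u1, u2. -/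
variable {I S Meth₂ : Type} [DecidableEq I]

def CompDo (Do₂ : Meth₂ → S → S) (u : I × Meth₂) (st : I → S) : I → S :=
  fun k => if k = u.1 then Do₂ u.2 (st k) else st k

def CompIT (IT₂ : Meth₂ → Meth₂ → Meth₂) (u1 u2 : I × Meth₂) : I × Meth₂ :=
  if u1.1 = u2.1 then (u1.1, IT₂ u1.2 u2.2) else u1

theorem comp_TP1 (Do₂ : Meth₂ → S → S) (IT₂ : Meth₂ → Meth₂ → Meth₂)
    (hTP1 : ∀ (s : S) (m1 m2 : Meth₂),
      Do₂ (IT₂ m2 m1) (Do₂ m1 s) = Do₂ (IT₂ m1 m2) (Do₂ m2 s))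
    (st : I → S) (u1 u2 : I × Meth₂) :
    CompDo Do₂ (CompIT IT₂ u2 u1) (CompDo Do₂ u1 st) =
      CompDo Do₂ (CompIT IT₂ u1 u2) (CompDo Do₂ u2 st) := by
  funext k
  obtain ⟨i, m1⟩ := u1
  obtain ⟨j, m2⟩ := u2
  simp only [CompDo, CompIT]
  by_cases hij : i = j <;> by_cases hki : k = i <;> by_cases hkj : k = j <;>
    subst_vars <;>
    simp_all [hTP1, Ne.symm]
end

section
/- (Theorem: CP2 for Update methods) Suppose the inner component satisfies TP2: IT₂(IT₂(m,m1), IT₂(m2,m1)) = IT₂(IT₂(m,m2), IT₂(m1,m2)) for all m, m1, m2. With composite methods (i, m) : I × Meth₂ and IT((i,m1),(j,m2)) = (i, IT₂(m1,m2)) if i = j else (i, m1), then TP2 holds for composite methods: IT(IT(u,u1), IT(u2,u1)) = IT(IT(u,u2), IT(u1,u2)) for all u, u1, u2. -/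
variable {I S Meth₂ : Type} [DecidableEq I]

theorem comp_TP2 (IT₂ : Meth₂ → Meth₂ → Meth₂)
    (hTP2 : ∀ m m1 m2 : Meth₂,
      IT₂ (IT₂ m m1) (IT₂ m2 m1) = IT₂ (IT₂ m m2) (IT₂ m1 m2))
    (u u1 u2 : I × Meth₂) :
    CompIT IT₂ (CompIT IT₂ u u1) (CompIT IT₂ u2 u1) =
      CompIT IT₂ (CompIT IT₂ u u2) (CompIT IT₂ u1 u2) := by
  obtain ⟨i, m⟩ := u
  obtain ⟨i1, m1⟩ := u1
  obtain ⟨i2, m2⟩ := u2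
  by_cases h1 : i = i1 <;> by_cases h2 : i = i2
  · subst h1; subst h2
    simp [CompIT, hTP2 m m1 m2]
  · subst h1
    simp [CompIT, h2, fun h => h2 (Eq.symm h), apply_ite Prod.fst, apply_ite Prod.snd]
  · subst h2
    simp [CompIT, h1, fun h => h1 (Eq.symm h), apply_ite Prod.fst, apply_ite Prod.snd]
  · by_cases h3 : i1 = i2
    · subst h3
      simp [CompIT, h1, h2]
    · simp [CompIT, h1, h2, h3, fun h => h3 (Eq.symm h), apply_ite Prod.fst, apply_ite Prod.snd]
end

section
/- (Consistency preservation, Theorem 5 analogue) If the inner component (S, Meth₂, Do₂, IT₂) satisfies both TP1 and TP2, then the dynamically composed component of Update methods (I × Meth₂ acting on I → S as above) satisfies both TP1 and TP2, i.e., it is consistent. -/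
variable {I S Meth₂ : Type} [DecidableEq I]

theorem comp_consistent (Do₂ : Meth₂ → S → S) (IT₂ : Meth₂ → Meth₂ → Meth₂)
    (hTP1 : ∀ (s : S) (m1 m2 : Meth₂),
      Do₂ (IT₂ m2 m1) (Do₂ m1 s) = Do₂ (IT₂ m1 m2) (Do₂ m2 s))
    (hTP2 : ∀ m m1 m2 : Meth₂,
      IT₂ (IT₂ m m1) (IT₂ m2 m1) = IT₂ (IT₂ m m2) (IT₂ m1 m2)) :
    (∀ (st : I → S) (u1 u2 : I × Meth₂),
      CompDo Do₂ (CompIT IT₂ u2 u1) (CompDo Do₂ u1 st) =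
        CompDo Do₂ (CompIT IT₂ u1 u2) (CompDo Do₂ u2 st)) ∧
    (∀ u u1 u2 : I × Meth₂,
      CompIT IT₂ (CompIT IT₂ u u1) (CompIT IT₂ u2 u1) =
        CompIT IT₂ (CompIT IT₂ u u2) (CompIT IT₂ u1 u2)) := by
  constructor
  · rintro st ⟨i, m1⟩ ⟨j, m2⟩
    funext k
    simp only [CompDo, CompIT]
    by_cases hij : i = j
    · subst hij
      by_cases hk : k = i <;> simp [hk, hTP1]
    · have hji : ¬ j = i := fun h => hij h.symm
      by_cases hki : k = i <;> by_cases hkj : k = j <;>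
        simp_all [CompDo, CompIT]
  · rintro ⟨i, m⟩ ⟨j, m1⟩ ⟨l, m2⟩
    simp only [CompIT]
    by_cases hij : i = j
    · subst hij
      by_cases hil : i = l
      · subst hil; simp [hTP2]
      · simp [hil, Ne.symm hil]
    · by_cases hil : i = l
      · subst hil
        simp [hij, Ne.symm hij]
      · by_cases hjl : j = l
        · subst hjl
          simp [hij, hil]
        · simp [hij, hil, hjl, Ne.symm hjl]
end

section
/- TP1 and TP2 together imply convergence for three concurrent operations: if (Do, IT) satisfies TP1 and TP2, then for any state st and operations m1, m2, m3, executing the sequence [m1; IT(m2,m1); IT*(m3,[m1; IT(m2,m1)])] on st yields the same state as executing [m2; IT(m1,m2); IT*(m3,[m2; IT(m1,m2)])] on st, where IT*(m,[]) = m and IT*(m, a::l) = IT*(IT(m,a), l). -/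
variable {Meth State : Type}

def DoList (Do : Meth → State → State) (l : List Meth) (st : State) : State :=
  l.foldl (fun s m => Do m s) st

def ITstar (IT : Meth → Meth → Meth) (m : Meth) : List Meth → Meth
  | [] => m
  | a :: l => ITstar IT (IT m a) l

theorem tp1_tp2_three_ops (Do : Meth → State → State) (IT : Meth → Meth → Meth)
    (hTP1 : ∀ (st : State) (m1 m2 : Meth),
      Do (IT m2 m1) (Do m1 st) = Do (IT m1 m2) (Do m2 st))
    (hTP2 : ∀ m m1 m2 : Meth,
      IT (IT m m1) (IT m2 m1) = IT (IT m m2) (IT m1 m2))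
    (st : State) (m1 m2 m3 : Meth) :
    DoList Do [m1, IT m2 m1, ITstar IT m3 [m1, IT m2 m1]] st =
      DoList Do [m2, IT m1 m2, ITstar IT m3 [m2, IT m1 m2]] st := by
  simp [DoList, ITstar, hTP1 st m1 m2, hTP2]
end
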